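/- Let Z be a uniformly perfect compact metric space and G ↷ Z an η-quasi-Möbius action by homeomorphisms. Suppose for each k ∈ ℕ we are given: a ball B_k = B(p_k, R_k) ⊆ Z and a subset D_k ⊆ B_k that is (ε_k R_k)-dense in B_k (ε_k > 0); pairwise distinct points x¹_k, x²_k, x³_k ∈ B(p_k, λ_k R_k) (λ_k > 0) with d(xⁱ_k, xʲ_k) > δ_k R_k for i ≠ j (δ_k > 0); and group elements g_k ∈ G such that the images yⁱ_k := g_k(xⁱ_k) satisfy d(yⁱ_k, yʲ_k) > δ' for i ≠ j, where δ' > 0 is independent of k. If λ_k → 0 as k → ∞ and the sequence (ε_k/δ_k²) is bounded, then the Hausdorff distance dist_H(g_k(D_k), Z) → 0 as k → ∞. -/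

import Mathlib

open Metric Set MeasureTheory Filter Topology

noncomputable section

/-- Cross-ratio of a four-tuple of points in a metric space. -/
def crossRatio {Z : Type*} [MetricSpace Z] (z₁ z₂ z₃ z₄ : Z) : NNReal :=
  nndist z₁ z₃ * nndist z₂ z₄ / (nndist z₁ z₄ * nndist z₂ z₃)

/-- `f : X → Y` is `η`-quasi-Möbius. -/
def IsQuasiMobius {X Y : Type*} [MetricSpace X] [MetricSpace Y]
    (η : NNReal ≃ₜ NNReal) (f : X → Y) : Prop :=
  Function.Injective f ∧
  ∀ x₁ x₂ x₃ x₄ : X, x₁ ≠ x₂ → x₁ ≠ x₃ → x₁ ≠ x₄ → x₂ ≠ x₃ → x₂ ≠ x₄ → x₃ ≠ x₄ →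
    crossRatio (f x₁) (f x₂) (f x₃) (f x₄) ≤ η (crossRatio x₁ x₂ x₃ x₄)

/-- `f : X → Y` is `η`-quasi-symmetric. -/
def IsQuasiSymmetric {X Y : Type*} [MetricSpace X] [MetricSpace Y]
    (η : NNReal ≃ₜ NNReal) (f : X → Y) : Prop :=
  Function.Injective f ∧
  ∀ x₁ x₂ x₃ : X, x₁ ≠ x₂ → x₁ ≠ x₃ → x₂ ≠ x₃ →
    nndist (f x₁) (f x₂) / nndist (f x₁) (f x₃) ≤ η (nndist x₁ x₂ / nndist x₁ x₃)

/-- Lebesgue covering dimension is at most `n`. -/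
def covDimLE (X : Type*) [TopologicalSpace X] (n : ℕ) : Prop :=
  ∀ 𝒰 : Set (Set X), (∀ U ∈ 𝒰, IsOpen U) → ⋃₀ 𝒰 = univ →
    ∃ 𝒱 : Set (Set X), (∀ V ∈ 𝒱, IsOpen V) ∧ ⋃₀ 𝒱 = univ ∧
      (∀ V ∈ 𝒱, ∃ U ∈ 𝒰, V ⊆ U) ∧
      ∀ x : X, {V ∈ 𝒱 | x ∈ V}.encard ≤ (n + 1 : ℕ)

/-- Lebesgue covering (topological) dimension. -/
noncomputable def topDim (X : Type*) [TopologicalSpace X] : ℕ∞ :=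
  ⨅ (n : ℕ) (_ : covDimLE X n), (n : ℕ∞)

/-- Ahlfors `Q`-regularity. -/
def AhlforsRegular (Q : ℝ) (Z : Type*) [MetricSpace Z] [MeasurableSpace Z] [BorelSpace Z] :
    Prop :=
  0 < Q ∧ CompleteSpace Z ∧ 0 < Metric.diam (univ : Set Z) ∧
  ∃ C : ℝ, 1 ≤ C ∧ ∀ (z : Z) (R : ℝ), 0 < R → R ≤ Metric.diam (univ : Set Z) →
    ENNReal.ofReal (R ^ Q / C) ≤ μH[Q] (Metric.ball z R) ∧
    μH[Q] (Metric.ball z R) ≤ ENNReal.ofReal (C * R ^ Q)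

/-- The action of `G` on `Z` is by homeomorphisms, each `η`-quasi-Möbius. -/
def QMAction (η : NNReal ≃ₜ NNReal) (G Z : Type*) [Group G] [MulAction G Z]
    [MetricSpace Z] : Prop :=
  (∀ g : G, Continuous fun z : Z => g • z) ∧
  ∀ g : G, IsQuasiMobius η (fun z : Z => g • z)

/-- Cocompactness of the induced action on distinct triples (for compact `Z`). -/
def TriplesCocompact (G Z : Type*) [Group G] [MulAction G Z] [MetricSpace Z] : Prop :=
  ∃ δ > (0:ℝ), ∀ z₁ z₂ z₃ : Z, z₁ ≠ z₂ → z₁ ≠ z₃ → z₂ ≠ z₃ →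
    ∃ g : G, δ ≤ dist (g • z₁) (g • z₂) ∧ δ ≤ dist (g • z₁) (g • z₃) ∧
      δ ≤ dist (g • z₂) (g • z₃)

def IsStableValue {X Y : Type*} [TopologicalSpace X] [MetricSpace Y]
    (f : X → Y) (y : Y) : Prop :=
  ∃ ε > (0:ℝ), ∀ g : X → Y, Continuous g → (∀ x, dist (f x) (g x) < ε) → y ∈ range g

def IsStableValueOn {X Y : Type*} [TopologicalSpace X] [MetricSpace Y]
    (f : X → Y) (s : Set X) (y : Y) : Prop :=
  IsStableValue (fun x : s => f x) y

def IsStablePoint {X Y : Type*} [TopologicalSpace X] [MetricSpace Y]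
    (f : X → Y) (x : X) : Prop :=
  ∀ U ∈ nhds x, IsStableValueOn f U (f x)

/-- `f` is a regular map. -/
def IsRegularMap {X Y : Type*} [MetricSpace X] [MetricSpace Y] (f : X → Y) : Prop :=
  (∃ L : NNReal, LipschitzWith L f) ∧
  ∃ N : ℕ, ∀ (y : Y) (r : ℝ), 0 < r → ∃ t : Finset X, t.card ≤ N ∧
    f ⁻¹' Metric.ball y r ⊆ ⋃ c ∈ t, Metric.ball c r

/-- A metric space is doubling. -/
def MetricDoubling (Y : Type*) [MetricSpace Y] : Prop :=
  ∃ M : ℕ, ∀ (y : Y) (R : ℝ), ∃ t : Finset Y, t.card ≤ M ∧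
    Metric.ball y R ⊆ ⋃ c ∈ t, Metric.ball c (R / 2)

/-- A metric space is uniformly perfect. -/
def UniformlyPerfect (Z : Type*) [MetricSpace Z] : Prop :=
  ∃ lam : ℝ, 1 ≤ lam ∧ ∀ (z : Z) (R : ℝ), 0 < R → R ≤ Metric.diam (univ : Set Z) →
    (Metric.closedBall z R \ Metric.ball z (R / lam)).Nonempty

/-- `(S, q)` is a weak tangent of `Z`: `S` is complete and some rescalings
`(λ_k Z, p_k)` converge to `(S, q)` in the pointed Gromov–Hausdorff sense. -/
def PointedWeakTangent (Z : Type*) [MetricSpace Z] (S : Type*) [MetricSpace S]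
    (q : S) : Prop :=
  CompleteSpace S ∧
  ∃ (lam : ℕ → ℝ) (p : ℕ → Z), (∀ k, 0 < lam k) ∧ Tendsto lam atTop atTop ∧
    ∀ R > (0:ℝ), ∀ ε > (0:ℝ), ∃ (N : ℕ) (M : Set S),
      q ∈ M ∧ M ⊆ Metric.ball q R ∧ (∀ s ∈ Metric.ball q R, ∃ m ∈ M, dist s m ≤ ε) ∧
      ∀ k ≥ N, ∃ (Mk : Set Z) (F : Z → S),
        p k ∈ Mk ∧ (∀ z ∈ Mk, lam k * dist z (p k) < R) ∧
        (∀ z : Z, lam k * dist z (p k) < R → ∃ w ∈ Mk, lam k * dist z w ≤ ε) ∧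
        F (p k) = q ∧ Set.BijOn F Mk M ∧
        ∀ a ∈ Mk, ∀ b ∈ Mk, |lam k * dist a b - dist (F a) (F b)| < ε

/-- A self-homeomorphism of `ℝ≥0` maps `0` to `0`. -/
lemma homeo_nnreal_map_zero (η : NNReal ≃ₜ NNReal) : η 0 = 0 := by
  by_contra h
  have hc : 0 < η 0 := pos_iff_ne_zero.mpr h
  have himg : (fun s => η s) '' Set.Ioi 0 = {η 0}ᶜ := by
    ext y
    constructor
    · rintro ⟨s, hs, rfl⟩
      simp only [Set.mem_compl_iff, Set.mem_singleton_iff]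
      intro e
      exact absurd (η.injective e) (ne_of_gt hs)
    · intro hy
      refine ⟨η.symm y, ?_, η.apply_symm_apply y⟩
      rw [Set.mem_Ioi, pos_iff_ne_zero]
      intro e
      apply hy
      simp only [Set.mem_singleton_iff]
      rw [← η.apply_symm_apply y, e]
  have hpc : IsPreconnected ({η 0}ᶜ : Set NNReal) := by
    rw [← himg]
    exact isPreconnected_Ioi.image _ η.continuous.continuousOn
  obtain ⟨z, hz⟩ := hpc (Set.Iio (η 0)) (Set.Ioi (η 0)) isOpen_Iio isOpen_Ioi
    (fun y hy => (lt_or_gt_of_ne (show y ≠ η 0 from hy)).imp id id)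
    ⟨0, hc.ne, hc⟩
    ⟨η 0 + 1, fun h => absurd (Set.mem_singleton_iff.mp h) (ne_of_gt (lt_add_of_pos_right _ one_pos)),
      Set.mem_Ioi.mpr (lt_add_of_pos_right _ one_pos)⟩
  exact absurd (lt_trans hz.2.1 hz.2.2) (lt_irrefl z)

/-- Quantitative upper bound on the cross ratio from distance bounds. -/
lemma crossRatio_le_of_bounds {Z : Type*} [MetricSpace Z] {z1 z2 z3 z4 : Z}
    {t n1 n2 d1 d2 : ℝ}
    (h1 : dist z1 z3 ≤ n1) (h2 : dist z2 z4 ≤ n2)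
    (hd1 : 0 < d1) (hd2 : 0 < d2)
    (h3 : d1 ≤ dist z1 z4) (h4 : d2 ≤ dist z2 z3)
    (ht : n1 * n2 ≤ t * (d1 * d2)) :
    crossRatio z1 z2 z3 z4 ≤ Real.toNNReal t := by
  have hC : (0:ℝ) < dist z1 z4 := lt_of_lt_of_le hd1 h3
  have hD : (0:ℝ) < dist z2 z3 := lt_of_lt_of_le hd2 h4
  have hC' : nndist z1 z4 ≠ 0 := fun h => (dist_pos.mp hC) (nndist_eq_zero.mp h)
  have hD' : nndist z2 z3 ≠ 0 := fun h => (dist_pos.mp hD) (nndist_eq_zero.mp h)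
  have hn1 : 0 ≤ n1 := le_trans dist_nonneg h1
  have hn2 : 0 ≤ n2 := le_trans dist_nonneg h2
  have ht0 : 0 ≤ t := by nlinarith [mul_pos hd1 hd2, mul_nonneg hn1 hn2]
  rw [crossRatio, div_le_iff₀ (pos_iff_ne_zero.mpr (mul_ne_zero hC' hD')), ← NNReal.coe_le_coe]
  push_cast
  rw [Real.coe_toNNReal t ht0]
  have P1 : dist z1 z3 * dist z2 z4 ≤ n1 * n2 := mul_le_mul h1 h2 dist_nonneg hn1
  have P2 : d1 * d2 ≤ dist z1 z4 * dist z2 z3 := mul_le_mul h3 h4 hd2.le dist_nonneg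
  have P3 : t * (d1 * d2) ≤ t * (dist z1 z4 * dist z2 z3) :=
    mul_le_mul_of_nonneg_left P2 ht0
  linarith

/-- From a bound on `η` of a cross ratio, a distance bound on the image. -/
lemma image_dist_le {Z : Type*} [MetricSpace Z] {G : Type*} [Group G] [MulAction G Z]
    (η : NNReal ≃ₜ NNReal) (hqm : ∀ g : G, IsQuasiMobius η (fun z : Z => g • z))
    (g : G) {z1 z2 z3 z4 : Z}
    (h12 : z1 ≠ z2) (h13 : z1 ≠ z3) (h14 : z1 ≠ z4)
    (h23 : z2 ≠ z3) (h24 : z2 ≠ z4) (h34 : z3 ≠ z4)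
    {E δ' d₀ : ℝ} (hη : ((η (crossRatio z1 z2 z3 z4) : NNReal) : ℝ) ≤ E)
    (hδ' : 0 < δ') (hsep : δ' ≤ dist (g • z2) (g • z4))
    (hd₀ : ∀ a b : Z, dist a b ≤ d₀) :
    dist (g • z1) (g • z3) ≤ E * d₀ ^ 2 / δ' := by
  have hinj : Function.Injective (fun z : Z => g • z) := MulAction.injective g
  have hq := (hqm g).2 z1 z2 z3 z4 h12 h13 h14 h23 h24 h34
  have hE0 : 0 ≤ E := le_trans (η (crossRatio z1 z2 z3 z4)).coe_nonneg hη
  have h14' : (0:ℝ) < dist (g • z1) (g • z4) := dist_pos.mpr (fun e => h14 (hinj e))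
  have h23' : (0:ℝ) < dist (g • z2) (g • z3) := dist_pos.mpr (fun e => h23 (hinj e))
  have hcoe : ((crossRatio (g • z1) (g • z2) (g • z3) (g • z4) : NNReal) : ℝ)
      = dist (g • z1) (g • z3) * dist (g • z2) (g • z4) /
        (dist (g • z1) (g • z4) * dist (g • z2) (g • z3)) := by
    simp [crossRatio]
  have hle : dist (g • z1) (g • z3) * dist (g • z2) (g • z4) /
        (dist (g • z1) (g • z4) * dist (g • z2) (g • z3)) ≤ E := by
    rw [← hcoe]
    exact le_trans (by exact_mod_cast hq) hη
  rw [div_le_iff₀ (mul_pos h14' h23')] at hle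
  rw [le_div_iff₀ hδ']
  have hA : 0 ≤ dist (g • z1) (g • z3) := dist_nonneg
  have h1 : dist (g • z1) (g • z4) ≤ d₀ := hd₀ _ _
  have h2 : dist (g • z2) (g • z3) ≤ d₀ := hd₀ _ _
  have hCD : dist (g • z1) (g • z4) * dist (g • z2) (g • z3) ≤ d₀ * d₀ :=
    mul_le_mul h1 h2 h23'.le (le_trans h14'.le h1)
  have hE2 : E * (dist (g • z1) (g • z4) * dist (g • z2) (g • z3)) ≤ E * (d₀ * d₀) :=
    mul_le_mul_of_nonneg_left hCD hE0
  nlinarith [mul_le_mul_of_nonneg_left hsep hA]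

/-- Among a `s`-separated triple, at least two points are `s/2`-far from any point. -/
lemma two_good {Z : Type*} [MetricSpace Z] (x : Fin 3 → Z) (w : Z) (s : ℝ)
    (hsep : ∀ i j : Fin 3, i ≠ j → s < dist (x i) (x j)) :
    ∃ a b : Fin 3, a ≠ b ∧ s / 2 ≤ dist w (x a) ∧ s / 2 ≤ dist w (x b) := by
  by_cases h0 : s / 2 ≤ dist w (x 0)
  · by_cases h1 : s / 2 ≤ dist w (x 1)
    · exact ⟨0, 1, by decide, h0, h1⟩
    · by_cases h2 : s / 2 ≤ dist w (x 2)
      · exact ⟨0, 2, by decide, h0, h2⟩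
      · exfalso
        have hs := hsep 1 2 (by decide)
        have htr := dist_triangle (x 1) w (x 2)
        rw [dist_comm (x 1) w] at htr
        push_neg at h1 h2
        linarith
  · by_cases h1 : s / 2 ≤ dist w (x 1)
    · by_cases h2 : s / 2 ≤ dist w (x 2)
      · exact ⟨1, 2, by decide, h1, h2⟩
      · exfalso
        have hs := hsep 0 2 (by decide)
        have htr := dist_triangle (x 0) w (x 2)
        rw [dist_comm (x 0) w] at htr
        push_neg at h0 h2
        linarith
    · exfalso
      have hs := hsep 0 1 (by decide)
      have htr := dist_triangle (x 0) w (x 1)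
      rw [dist_comm (x 0) w] at htr
      push_neg at h0 h1
      linarith

set_option maxHeartbeats 2000000 in
/-- **Bonk–Kleiner, Lemma 5.1 (i).** Blowing up triples deep inside balls of a
uniformly perfect compact space by an `η`-quasi-Möbius action spreads dense subsets
of the balls to sets Hausdorff-close to the whole space. -/
theorem images_of_dense_sets_fill_in {Z : Type*} [MetricSpace Z] [CompactSpace Z]
    (hup : UniformlyPerfect Z)
    {G : Type*} [Group G] [MulAction G Z] (η : NNReal ≃ₜ NNReal)
    (hcont : ∀ g : G, Continuous fun z : Z => g • z)
    (hqm : ∀ g : G, IsQuasiMobius η (fun z : Z => g • z))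
    (p : ℕ → Z) (R : ℕ → ℝ) (hR : ∀ k, 0 < R k)
    (ε δ lam : ℕ → ℝ) (hε : ∀ k, 0 < ε k) (hδ : ∀ k, 0 < δ k) (hlam : ∀ k, 0 < lam k)
    (D : ℕ → Set Z) (hD : ∀ k, D k ⊆ Metric.ball (p k) (R k))
    (hDdense : ∀ k, ∀ z ∈ Metric.ball (p k) (R k), ∃ w ∈ D k, dist z w ≤ ε k * R k)
    (x : ℕ → Fin 3 → Z)
    (hxball : ∀ k i, x k i ∈ Metric.ball (p k) (lam k * R k))
    (hxdist : ∀ k, ∀ i j : Fin 3, i ≠ j → x k i ≠ x k j)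
    (hxsep : ∀ k, ∀ i j : Fin 3, i ≠ j → δ k * R k < dist (x k i) (x k j))
    (g : ℕ → G) (δ' : ℝ) (hδ' : 0 < δ')
    (hgsep : ∀ k, ∀ i j : Fin 3, i ≠ j → δ' < dist (g k • x k i) (g k • x k j))
    (hlam0 : Tendsto lam atTop (nhds 0))
    (hbdd : ∃ C : ℝ, ∀ k, ε k / (δ k) ^ 2 ≤ C) :
    Tendsto (fun k => hausdorffDist ((fun z => g k • z) '' D k) (univ : Set Z))
      atTop (nhds 0) := by
  classical
  obtain ⟨L, hL1, hUP⟩ := hup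
  have hL0 : (0:ℝ) < L := lt_of_lt_of_le one_pos hL1
  obtain ⟨C₀, hC₀⟩ := hbdd
  set C : ℝ := max C₀ 1 with hCdef
  have hC1 : (1:ℝ) ≤ C := le_max_right _ _
  have hC0 : (0:ℝ) < C := lt_of_lt_of_le one_pos hC1
  have hC : ∀ k, ε k ≤ C * δ k ^ 2 := by
    intro k
    have h := le_trans (hC₀ k) (le_max_left C₀ 1)
    have h2 := (div_le_iff₀ (pow_pos (hδ k) 2)).mp h
    linarith
  have hδlam : ∀ k, δ k ≤ 2 * lam k := by
    intro k
    have hs := hxsep k 0 1 (by decide)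
    have h0 := Metric.mem_ball.mp (hxball k 0)
    have h1 := Metric.mem_ball.mp (hxball k 1)
    have htr := dist_triangle_right (x k 0) (x k 1) (p k)
    have hRk := hR k
    nlinarith
  set d₀ := Metric.diam (Set.univ : Set Z) with hd₀def
  have hbZ : Bornology.IsBounded (Set.univ : Set Z) := isCompact_univ.isBounded
  have hd₀ : ∀ a b : Z, dist a b ≤ d₀ := fun a b =>
    Metric.dist_le_diam_of_mem hbZ (Set.mem_univ a) (Set.mem_univ b)
  have hd₀pos : 0 < d₀ :=
    lt_of_lt_of_le (dist_pos.mpr (hxdist 0 0 1 (by decide))) (hd₀ _ _)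
  have hη0 : η 0 = 0 := homeo_nnreal_map_zero η
  rw [Metric.tendsto_atTop]
  intro ζ hζ
  set c2 : ℝ := ζ * δ' / (8 * d₀ ^ 2) with hc2def
  have hc2pos : 0 < c2 := div_pos (mul_pos hζ hδ') (by nlinarith [hd₀pos])
  have hconv : c2 * d₀ ^ 2 / δ' = ζ / 8 := by
    rw [hc2def]
    field_simp
  -- find a threshold θ for η near 0
  have hmem : η ⁻¹' (Set.Iio (Real.toNNReal c2)) ∈ nhds (0 : NNReal) := by
    apply (η.continuous.isOpen_preimage _ isOpen_Iio).mem_nhds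
    simp only [Set.mem_preimage, hη0, Set.mem_Iio]
    exact Real.toNNReal_pos.mpr hc2pos
  obtain ⟨θ, hθpos, hθsub⟩ := NNReal.nhds_zero_basis.mem_iff.mp hmem
  have hθ : ∀ s : NNReal, s < θ → ((η s : NNReal) : ℝ) < c2 := by
    intro s hs
    have h2 : η s < Real.toNNReal c2 := hθsub hs
    calc ((η s : NNReal) : ℝ) < ((Real.toNNReal c2 : NNReal) : ℝ) := by exact_mod_cast h2
      _ = c2 := Real.coe_toNNReal _ hc2pos.le
  have hθR : (0:ℝ) < (θ : ℝ) := by exact_mod_cast hθpos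
  -- eventual smallness of lam
  have hminpos : 0 < min (1/(8*C)) (1/(4*L)) :=
    lt_min (div_pos one_pos (by linarith)) (div_pos one_pos (by linarith))
  have e1 : ∀ᶠ k in atTop, lam k < min (1/(8*C)) (1/(4*L)) :=
    hlam0.eventually (gt_mem_nhds hminpos)
  have e2 : ∀ᶠ k in atTop, 16*C*lam k < (θ : ℝ) := by
    have h := hlam0.const_mul (16*C)
    rw [mul_zero] at h
    exact h.eventually (gt_mem_nhds hθR)
  have e3 : ∀ᶠ k in atTop, 24*L*lam k < (θ : ℝ) := by
    have h := hlam0.const_mul (24*L)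
    rw [mul_zero] at h
    exact h.eventually (gt_mem_nhds hθR)
  obtain ⟨N, hN⟩ := Filter.eventually_atTop.mp ((e1.and e2).and e3)
  refine ⟨N, fun k hk => ?_⟩
  obtain ⟨⟨hk1, hk2⟩, hk3⟩ := hN k hk
  have hlam8C : lam k ≤ 1/(8*C) := (lt_of_lt_of_le hk1 (min_le_left _ _)).le
  have hlam4L : lam k ≤ 1/(4*L) := (lt_of_lt_of_le hk1 (min_le_right _ _)).le
  have hRk := hR k
  have hδk := hδ k
  have hεk := hε k
  have hlamk := hlam k
  have hτ16 : Real.toNNReal (16*C*lam k) < θ :=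
    (Real.toNNReal_lt_iff_lt_coe (by nlinarith [mul_pos hC0 hlamk])).mpr hk2
  have hτ24 : Real.toNNReal (24*L*lam k) < θ :=
    (Real.toNNReal_lt_iff_lt_coe (by nlinarith [mul_pos hL0 hlamk])).mpr hk3
  have ηb1 : ∀ s : NNReal, s ≤ Real.toNNReal (16*C*lam k) → ((η s : NNReal) : ℝ) < c2 :=
    fun s hs => hθ s (lt_of_le_of_lt hs hτ16)
  have ηb2 : ∀ s : NNReal, s ≤ Real.toNNReal (24*L*lam k) → ((η s : NNReal) : ℝ) < c2 :=
    fun s hs => hθ s (lt_of_le_of_lt hs hτ24)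
  -- arithmetic smallness facts
  have h8 : 8*C*lam k ≤ 1 := by
    have h := mul_le_mul_of_nonneg_left hlam8C (by linarith : (0:ℝ) ≤ 8*C)
    rwa [mul_one_div, div_self (by linarith : (8:ℝ)*C ≠ 0)] at h
  have hCδ : C * δ k ≤ 1/4 := by nlinarith [hδlam k, hC0, hδk, hlamk]
  have hεδ : ε k ≤ δ k / 4 := by nlinarith [hC k, hCδ, hδk]
  have hlamR : lam k * R k ≤ R k / (4*L) := by
    have h := mul_le_mul_of_nonneg_right hlam4L hRk.le
    calc lam k * R k ≤ 1/(4*L) * R k := h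
      _ = R k / (4*L) := by ring
  -- main claim: points of the ball map close to the image of D k
  have key : ∀ w : Z, dist w (p k) < R k →
      ∃ y ∈ (fun z => g k • z) '' D k, dist (g k • w) y ≤ ζ / 8 := by
    intro w hw
    obtain ⟨v, hvD, hvd⟩ := hDdense k w (Metric.mem_ball.mpr hw)
    by_cases hwv : w = v
    · refine ⟨g k • v, Set.mem_image_of_mem _ hvD, ?_⟩
      rw [hwv, dist_self]
      linarith
    · obtain ⟨a, b, hab, ha, hb⟩ := two_good (x k) w (δ k * R k) (fun i j hij => hxsep k i j hij)
      have hδR4 : ε k * R k ≤ δ k * R k / 4 := by nlinarith [hεδ, hRk]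
      have hav : δ k * R k / 4 ≤ dist (x k a) v := by
        have h := dist_triangle w v (x k a)
        rw [dist_comm (x k a) v]
        linarith
      have hbv : δ k * R k / 4 ≤ dist (x k b) v := by
        have h := dist_triangle w v (x k b)
        rw [dist_comm (x k b) v]
        linarith
      have hδRpos : (0:ℝ) < δ k * R k := mul_pos hδk hRk
      have hδR2pos : (0:ℝ) < δ k * R k / 2 := by linarith
      have hδR4pos : (0:ℝ) < δ k * R k / 4 := by linarith
      have hwa : w ≠ x k a := dist_pos.mp (lt_of_lt_of_le hδR2pos ha)
      have hwb : w ≠ x k b := dist_pos.mp (lt_of_lt_of_le hδR2pos hb)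
      have hxav : x k a ≠ v := dist_pos.mp (lt_of_lt_of_le hδR4pos hav)
      have hxbv : x k b ≠ v := dist_pos.mp (lt_of_lt_of_le hδR4pos hbv)
      have hxab : x k a ≠ x k b := hxdist k a b hab
      have hcr : crossRatio w (x k a) v (x k b) ≤ Real.toNNReal (16*C*lam k) := by
        apply crossRatio_le_of_bounds (n1 := ε k * R k) (n2 := 2*lam k*R k)
          (d1 := δ k * R k / 2) (d2 := δ k * R k / 4)
        · exact hvd
        · have h0 := Metric.mem_ball.mp (hxball k a)
          have h1 := Metric.mem_ball.mp (hxball k b)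
          have htr := dist_triangle_right (x k a) (x k b) (p k)
          linarith
        · exact hδR2pos
        · exact hδR4pos
        · exact hb
        · exact hav
        · nlinarith [mul_le_mul_of_nonneg_right (hC k)
            (show (0:ℝ) ≤ 2*lam k*(R k*R k) by nlinarith [mul_pos hlamk (mul_pos hRk hRk)])]
      have himg := image_dist_le η hqm (g k) hwa hwv hwb hxav hxab (Ne.symm hxbv)
        (le_of_lt (ηb1 _ hcr)) hδ' (le_of_lt (hgsep k a b hab)) hd₀
      refine ⟨g k • v, Set.mem_image_of_mem _ hvD, ?_⟩
      calc dist (g k • w) (g k • v) ≤ c2 * d₀ ^ 2 / δ' := himg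
        _ = ζ / 8 := hconv
  -- every point of Z is ζ/2-close to the image of D k
  have main2 : ∀ u : Z, ∃ y ∈ (fun z => g k • z) '' D k, dist u y ≤ ζ / 2 := by
    intro u
    set w := (g k)⁻¹ • u with hwdef
    have hgw : g k • w = u := smul_inv_smul _ _
    by_cases hcase : dist w (p k) < R k
    · obtain ⟨y, hyD, hyd⟩ := key w hcase
      rw [hgw] at hyd
      exact ⟨y, hyD, by linarith⟩
    · push_neg at hcase
      have hRd : R k ≤ d₀ := le_trans hcase (hd₀ _ _)
      obtain ⟨w₀, hw₀⟩ := hUP (p k) (R k / 2) (by linarith) (by linarith)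
      have hw₀1 : dist w₀ (p k) ≤ R k / 2 := Metric.mem_closedBall.mp hw₀.1
      have hw₀2 : R k / 2 / L ≤ dist w₀ (p k) :=
        not_lt.mp (fun h => hw₀.2 (Metric.mem_ball.mpr h))
      obtain ⟨y, hyD, hyd⟩ := key w₀ (by linarith)
      set r := dist w (p k) with hrdef
      have hrR : R k ≤ r := hcase
      have hrpos : (0:ℝ) < r := lt_of_lt_of_le hRk hrR
      have hxa := Metric.mem_ball.mp (hxball k 0)
      have hxb := Metric.mem_ball.mp (hxball k 1)
      have hLf : R k / (4*L) ≤ R k / 4 := by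
        apply div_le_div_of_nonneg_left hRk.le (by norm_num) (by linarith)
      have hlRr : lam k * R k ≤ r / 4 := by
        have h4 : R k / 4 ≤ r / 4 := by linarith
        linarith [hlamR, hLf]
      have hwx0 : r / 2 ≤ dist w (x k 0) := by
        have h := dist_triangle w (x k 0) (p k)
        linarith
      have hwx1 : r / 2 ≤ dist w (x k 1) := by
        have h := dist_triangle w (x k 1) (p k)
        linarith
      have he : R k / 2 / L = 2 * (R k / (4*L)) := by ring
      have hx0w₀ : R k / (4*L) ≤ dist (x k 0) w₀ := by
        have h := dist_triangle w₀ (x k 0) (p k)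
        rw [dist_comm (x k 0) w₀]
        rw [he] at hw₀2
        linarith [hlamR]
      have hx1w₀ : R k / (4*L) ≤ dist (x k 1) w₀ := by
        have h := dist_triangle w₀ (x k 1) (p k)
        rw [dist_comm (x k 1) w₀]
        rw [he] at hw₀2
        linarith [hlamR]
      have hww₀ : R k / 2 ≤ dist w w₀ := by
        have h := dist_triangle w w₀ (p k)
        linarith
      have hepos : (0:ℝ) < R k / (4*L) := div_pos hRk (by linarith)
      have hwx0' : w ≠ x k 0 := dist_pos.mp (lt_of_lt_of_le (by linarith) hwx0)
      have hwx1' : w ≠ x k 1 := dist_pos.mp (lt_of_lt_of_le (by linarith) hwx1)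
      have hww₀' : w ≠ w₀ := dist_pos.mp (lt_of_lt_of_le (by linarith) hww₀)
      have hx0w₀' : x k 0 ≠ w₀ := dist_pos.mp (lt_of_lt_of_le hepos hx0w₀)
      have hx1w₀' : x k 1 ≠ w₀ := dist_pos.mp (lt_of_lt_of_le hepos hx1w₀)
      have hx01 : x k 0 ≠ x k 1 := hxdist k 0 1 (by decide)
      have hcr2 : crossRatio w (x k 0) w₀ (x k 1) ≤ Real.toNNReal (24*L*lam k) := by
        apply crossRatio_le_of_bounds (n1 := r + R k / 2) (n2 := 2*lam k*R k)
          (d1 := r / 2) (d2 := R k / (4*L))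
        · have h := dist_triangle w (p k) w₀
          have hcomm : dist (p k) w₀ = dist w₀ (p k) := dist_comm _ _
          linarith
        · have htr := dist_triangle_right (x k 0) (x k 1) (p k)
          linarith
        · linarith
        · exact hepos
        · exact hwx1
        · exact hx0w₀
        · have hL' : (L:ℝ) ≠ 0 := ne_of_gt hL0
          have heq : 24*L*lam k*(r/2*(R k/(4*L))) = 3*lam k*r*R k := by
            field_simp
            ring
          rw [heq]
          nlinarith [mul_nonneg (mul_nonneg (sub_nonneg.mpr hrR) hlamk.le) hRk.le]
      have himg2 := image_dist_le η hqm (g k) hwx0' hww₀' hwx1' hx0w₀' hx01 (Ne.symm hx1w₀')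
        (le_of_lt (ηb2 _ hcr2)) hδ' (le_of_lt (hgsep k 0 1 (by decide))) hd₀
      refine ⟨y, hyD, ?_⟩
      have htri : dist u y ≤ dist u (g k • w₀) + dist (g k • w₀) y := dist_triangle _ _ _
      have hd1 : dist u (g k • w₀) ≤ ζ / 8 := by
        rw [← hgw]
        calc dist (g k • w) (g k • w₀) ≤ c2 * d₀ ^ 2 / δ' := himg2
          _ = ζ / 8 := hconv
      linarith
  have hHD : hausdorffDist ((fun z => g k • z) '' D k) (Set.univ : Set Z) ≤ ζ / 2 := by
    apply hausdorffDist_le_of_mem_dist (by linarith)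
    · intro z _
      exact ⟨z, Set.mem_univ z, by rw [dist_self]; linarith⟩
    · intro u _
      exact main2 u
  rw [Real.dist_eq, sub_zero, abs_of_nonneg hausdorffDist_nonneg]
  linarith
end
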